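/- Let L be a finite-dimensional Lie algebra over any field F such that every maximal nilpotent subalgebra of L is a c-ideal of L. Then L is solvable. -/

import Mathlib

/-! Common definitions: c-ideals and related notions for Lie algebras
(following D. Towers, "C-ideals of Lie algebras"). -/

section Defs

variable (F : Type*) {L : Type*} [Field F] [LieRing L] [LieAlgebra F L]

/-- `B` is a *c-ideal* of `L`: there is an ideal `C` of `L` with `L = B + C` and
`B ∩ C ≤ B_L`, where `B_L` is the largest ideal of `L` contained in `B`; equivalently,
`B ∩ C` is contained in some ideal `D` of `L` with `D ≤ B`. -/
def IsCIdeal (B : LieSubalgebra F L) : Prop :=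
  ∃ C : LieIdeal F L,
    B.toSubmodule ⊔ (C : Submodule F L) = ⊤ ∧
    ∃ D : LieIdeal F L, (∀ x ∈ D, x ∈ B) ∧ ∀ x ∈ B, x ∈ C → x ∈ D

/-- A maximal subalgebra of `L`: proper, and maximal among proper subalgebras. -/
def IsMaximalSubalgebra (M : LieSubalgebra F L) : Prop :=
  M ≠ ⊤ ∧ ∀ K : LieSubalgebra F L, M < K → K = ⊤

/-- `B` is a maximal subalgebra of the subalgebra `C`:
`B` is a proper subalgebra of `C`, maximal among proper subalgebras contained in `C`. -/
def IsMaximalSubalgebraOf (B C : LieSubalgebra F L) : Prop :=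
  B < C ∧ ∀ K : LieSubalgebra F L, B < K → K ≤ C → K = C

/-- A maximal nilpotent subalgebra of `L`:
nilpotent and maximal among nilpotent subalgebras. -/
def IsMaximalNilpotentSubalgebra (C : LieSubalgebra F L) : Prop :=
  LieModule.IsNilpotent C C ∧
    ∀ D : LieSubalgebra F L, LieModule.IsNilpotent D D → C ≤ D → C = D

/-- The natural quotient map `L → L ⧸ I` as a morphism of Lie algebras. -/
def quotMk (I : LieIdeal F L) : L →ₗ⁅F⁆ L ⧸ I :=
  { (LieSubmodule.Quotient.mk' I).toLinearMap with
    map_lie' := fun {_ _} => rfl }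

/-- A supersolvable Lie algebra: there is a chain of ideals `0 = L_0 ⊆ ⋯ ⊆ L_n = L`
with `dim L_i = i` for each `0 ≤ i ≤ n`. -/
def IsSupersolvable (L : Type*) [LieRing L] [LieAlgebra F L] : Prop :=
  ∃ (n : ℕ) (c : ℕ → LieIdeal F L), Monotone c ∧ c 0 = ⊥ ∧ c n = ⊤ ∧
    ∀ i ≤ n, Module.finrank F (c i) = i

/-- A minimal abelian ideal of `L`: a nonzero abelian ideal `A` such that the only
ideals of `L` contained in `A` are `0` and `A`. -/
def IsMinimalAbelianIdeal (A : LieIdeal F L) : Prop :=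
  A ≠ ⊥ ∧ IsLieAbelian A ∧ ∀ I : LieIdeal F L, I ≤ A → I = ⊥ ∨ I = A

/-- The one-dimensional subspace spanned by `x`, as a Lie subalgebra
(it is closed under the bracket since `⁅x,x⁆ = 0`). -/
def lineSpan (x : L) : LieSubalgebra F L :=
  { Submodule.span F {x} with
    lie_mem' := by
      intro a b ha hb
      replace ha : a ∈ Submodule.span F {x} := ha
      replace hb : b ∈ Submodule.span F {x} := hb
      rw [Submodule.mem_span_singleton] at ha hb
      obtain ⟨c, rfl⟩ := ha
      obtain ⟨d, rfl⟩ := hb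
      show ⁅c • x, d • x⁆ ∈ Submodule.span F {x}
      simp }

/-- The Frattini subalgebra of a Lie algebra: the intersection of all maximal subalgebras. -/
def frattiniSubalgebra (L : Type*) [LieRing L] [LieAlgebra F L] : LieSubalgebra F L :=
  sInf {M : LieSubalgebra F L | IsMaximalSubalgebra F M}

/-- An almost abelian Lie algebra `K`: `K = K² ⊕ Fx` for some `x ∈ K`, where the derived
subalgebra `K²` is abelian and `⁅x, y⁆ = y` for all `y ∈ K²`. -/
def IsAlmostAbelian (K : Type*) [LieRing K] [LieAlgebra F K] : Prop :=
  ∃ x : K, IsLieAbelian (LieAlgebra.derivedSeries F K 1) ∧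
    (∀ y ∈ LieAlgebra.derivedSeries F K 1, ⁅x, y⁆ = y) ∧
    (LieAlgebra.derivedSeries F K 1 : Submodule F K) ⊔ Submodule.span F {x} = ⊤ ∧
    (LieAlgebra.derivedSeries F K 1 : Submodule F K) ⊓ Submodule.span F {x} = ⊥

end Defs

section AuxLemmas

variable (F : Type*) {L : Type*} [Field F] [LieRing L] [LieAlgebra F L]

lemma lineSpan_abelian (x : L) : IsLieAbelian (lineSpan F x) := by
  constructor
  rintro ⟨a, ha⟩ ⟨b, hb⟩
  replace ha : a ∈ Submodule.span F {x} := ha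
  replace hb : b ∈ Submodule.span F {x} := hb
  rw [Submodule.mem_span_singleton] at ha hb
  obtain ⟨c, rfl⟩ := ha
  obtain ⟨d, rfl⟩ := hb
  ext
  show ⁅c • x, d • x⁆ = (0 : L)
  simp

lemma lineSpan_nilpotent (x : L) : LieModule.IsNilpotent (lineSpan F x) (lineSpan F x) := by
  haveI := lineSpan_abelian F x
  infer_instance

variable [FiniteDimensional F L]

lemma exists_maxNilp_mem (x : L) :
    ∃ U : LieSubalgebra F L, IsMaximalNilpotentSubalgebra F U ∧ x ∈ U := by
  set T : Set ℕ := {n | ∃ V : LieSubalgebra F L, LieModule.IsNilpotent V V ∧ x ∈ V ∧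
    Module.finrank F V = n} with hT
  have hne : T.Nonempty :=
    ⟨_, lineSpan F x, lineSpan_nilpotent F x, Submodule.mem_span_singleton_self x, rfl⟩
  have hbdd : BddAbove T := by
    refine ⟨Module.finrank F L, ?_⟩
    rintro n ⟨V, _, _, rfl⟩
    exact Submodule.finrank_le V.toSubmodule
  obtain ⟨V, hVnil, hxV, hVrank⟩ := Nat.sSup_mem hne hbdd
  refine ⟨V, ⟨hVnil, ?_⟩, hxV⟩
  intro W hWnil hVW
  have h1 : Module.finrank F W ≤ Module.finrank F V := by
    rw [hVrank]
    exact le_csSup hbdd ⟨W, hWnil, hVW hxV, rfl⟩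
  exact LieSubalgebra.toSubmodule_injective
    (Submodule.eq_of_le_of_finrank_le
      ((LieSubalgebra.toSubmodule_le_toSubmodule V W).mpr hVW) h1)

lemma derivedSeries_stabilizes :
    ∃ k, LieAlgebra.derivedSeries F L (k + 1) = LieAlgebra.derivedSeries F L k := by
  by_contra hcon
  push_neg at hcon
  have hlt : ∀ n, Module.finrank F ((LieAlgebra.derivedSeries F L (n + 1) : Submodule F L)) <
      Module.finrank F ((LieAlgebra.derivedSeries F L n : Submodule F L)) := by
    intro n
    refine Submodule.finrank_lt_finrank_of_lt (lt_of_le_of_ne ?_ ?_)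
    · exact (LieSubmodule.toSubmodule_le_toSubmodule _ _).mpr
        (LieAlgebra.derivedSeriesOfIdeal_le (le_refl (⊤ : LieIdeal F L)) n.le_succ)
    · intro heq
      exact hcon n (LieSubmodule.toSubmodule_injective heq)
  have key : ∀ n, Module.finrank F ((LieAlgebra.derivedSeries F L n : Submodule F L)) + n ≤
      Module.finrank F ((LieAlgebra.derivedSeries F L 0 : Submodule F L)) := by
    intro n
    induction n with
    | zero => simp
    | succ n ih =>
      have := hlt n
      omega
  have := key (Module.finrank F ((LieAlgebra.derivedSeries F L 0 : Submodule F L)) + 1)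
  omega

end AuxLemmas

/-- If every maximal nilpotent subalgebra of `L` is a c-ideal of `L`,
then `L` is solvable. -/
theorem isSolvable_of_forall_maximalNilpotent_isCIdeal {F L : Type*} [Field F] [LieRing L]
    [LieAlgebra F L] [FiniteDimensional F L]
    (h : ∀ C : LieSubalgebra F L, IsMaximalNilpotentSubalgebra F C → IsCIdeal F C) :
    LieAlgebra.IsSolvable L := by
  classical
  obtain ⟨k, hk⟩ := derivedSeries_stabilizes F (L := L)
  have hsucc : ∀ n, LieAlgebra.derivedSeries F L (n + 1) =
      ⁅LieAlgebra.derivedSeries F L n, LieAlgebra.derivedSeries F L n⁆ := by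
    intro n
    rw [LieAlgebra.derivedSeries_def, LieAlgebra.derivedSeriesOfIdeal_succ,
      ← LieAlgebra.derivedSeries_def]
  have hstab : ∀ m, LieAlgebra.derivedSeries F L (k + m) = LieAlgebra.derivedSeries F L k := by
    intro m
    induction m with
    | zero => rfl
    | succ m ih =>
      have h1 : k + (m + 1) = (k + m) + 1 := by omega
      rw [h1, hsucc, ih, ← hsucc, hk]
  set S : LieIdeal F L := LieAlgebra.derivedSeries F L k with hS
  have hle : ∀ m, S ≤ LieAlgebra.derivedSeries F L m := by
    intro m
    have h1 : S = LieAlgebra.derivedSeries F L (k + m) := (hstab m).symm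
    rw [h1]
    exact LieAlgebra.derivedSeriesOfIdeal_le (le_refl (⊤ : LieIdeal F L)) (Nat.le_add_left m k)
  -- Main claim: S is contained in the radical.
  have hSrad : S ≤ LieAlgebra.radical F L := by
    intro x hx
    obtain ⟨U, hU, hxU⟩ := exists_maxNilp_mem F x
    obtain ⟨C, hsup, D, hDU, hUCD⟩ := h U hU
    haveI hUnil : LieModule.IsNilpotent U U := hU.1
    haveI hUsolv : LieAlgebra.IsSolvable U := inferInstance
    -- the composite `U → L → L ⧸ C` is surjective
    let g : U →ₗ⁅F⁆ L ⧸ C := (quotMk F C).comp U.incl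
    have hg : Function.Surjective g := by
      intro z
      obtain ⟨y, rfl⟩ := LieSubmodule.Quotient.surjective_mk' C z
      have hy : y ∈ U.toSubmodule ⊔ (C : Submodule F L) := by
        rw [hsup]; exact Submodule.mem_top
      obtain ⟨u, hu, c, hc, hyuc⟩ := Submodule.mem_sup.mp hy
      refine ⟨⟨u, hu⟩, ?_⟩
      show LieSubmodule.Quotient.mk' C u = LieSubmodule.Quotient.mk' C y
      rw [← sub_eq_zero, ← map_sub, LieSubmodule.Quotient.mk_eq_zero]
      have hc' : c ∈ C := hc
      have huy : u - y = -c := by rw [← hyuc]; abel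
      rw [huy]
      exact neg_mem hc'
    haveI hQsolv : LieAlgebra.IsSolvable (L ⧸ C) := hg.lieAlgebra_isSolvable
    obtain ⟨j, hj⟩ := (LieAlgebra.isSolvable_iff (R := F) (L := L ⧸ C)).mp hQsolv
    -- S ≤ C
    have hSC : ∀ y ∈ S, y ∈ C := by
      intro y hy
      have hyj : y ∈ LieAlgebra.derivedSeries F L j := hle j hy
      have h2 : quotMk F C y ∈ (LieAlgebra.derivedSeries F L j).map (quotMk F C) :=
        LieIdeal.mem_map hyj
      have h3 : quotMk F C y ∈ LieAlgebra.derivedSeries F (L ⧸ C) j :=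
        LieIdeal.derivedSeries_map_le j h2
      rw [hj, LieSubmodule.mem_bot] at h3
      exact (LieSubmodule.Quotient.mk_eq_zero C).mp h3
    have hxD : x ∈ D := hUCD x hxU (hSC x hx)
    -- D is solvable since it embeds in the nilpotent U
    haveI hDsolv : LieAlgebra.IsSolvable D := by
      let e : D →ₗ⁅F⁆ U :=
        { toFun := fun d => ⟨(d : L), hDU (d : L) d.2⟩
          map_add' := fun a b => rfl
          map_smul' := fun c a => rfl
          map_lie' := fun {a b} => rfl }
      have he : Function.Injective e := by
        intro a b hab
        have h2 : ((e a : U) : L) = ((e b : U) : L) := congrArg Subtype.val hab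
        exact Subtype.ext h2
      exact he.lieAlgebra_isSolvable
    have hDrad : D ≤ LieAlgebra.radical F L :=
      ((LieAlgebra.LieIdeal.solvable_iff_le_radical (R := F) (L := L) D).mp hDsolv)
    exact hDrad hxD
  -- Conclude: S = ⊥.
  haveI : LieAlgebra.IsSolvable (LieAlgebra.radical F L) := inferInstance
  obtain ⟨m, hm⟩ := (LieAlgebra.isSolvable_iff (R := F) (L := LieAlgebra.radical F L)).mp this
  rw [LieIdeal.derivedSeries_eq_bot_iff] at hm
  have hSfix : LieAlgebra.derivedSeriesOfIdeal F L m S = S := by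
    calc LieAlgebra.derivedSeriesOfIdeal F L m S
        = LieAlgebra.derivedSeriesOfIdeal F L m
            (LieAlgebra.derivedSeriesOfIdeal F L k ⊤) := by
          rw [hS, LieAlgebra.derivedSeries_def]
      _ = LieAlgebra.derivedSeriesOfIdeal F L (m + k) ⊤ :=
          (LieAlgebra.derivedSeriesOfIdeal_add (I := (⊤ : LieIdeal F L)) m k).symm
      _ = LieAlgebra.derivedSeries F L (k + m) := by
          rw [LieAlgebra.derivedSeries_def, Nat.add_comm]
      _ = S := hstab m
  have hSbot : S ≤ ⊥ := by
    rw [← hm, ← hSfix]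
    exact LieAlgebra.derivedSeriesOfIdeal_mono hSrad m
  exact (LieAlgebra.isSolvable_iff (R := F) (L := L)).mpr ⟨k, le_bot_iff.mp hSbot⟩
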